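/- Suppose the potential q is even on [0,a], i.e. q(a−x) = q(x) for all x ∈ [0,a]. Then for every λ ∈ ℂ, S(a) = 2·S(a/2)·S'(a/2). -/

import Mathlib

/-- Magnus–Winkler identity for even potentials: if `q` is even on `[0,a]`,
then the sine-like solution `S` of `−y\'\' + q y = λ y` satisfies
`S(a) = 2 S(a/2) S\'(a/2)`. -/
theorem even_potential_S_half_identity
    (a : ℝ) (ha : 0 < a) (q : ℝ → ℝ) (hq : ContinuousOn q (Set.Icc 0 a))
    (hqeven : ∀ x ∈ Set.Icc 0 a, q (a - x) = q x)
    (lam : ℂ) (C S Cd Sd : ℝ → ℂ)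
    (hC : ∀ x ∈ Set.Icc 0 a, HasDerivWithinAt C (Cd x) (Set.Icc 0 a) x)
    (hC' : ∀ x ∈ Set.Icc 0 a,
      HasDerivWithinAt Cd ((q x : ℂ) * C x - lam * C x) (Set.Icc 0 a) x)
    (hS : ∀ x ∈ Set.Icc 0 a, HasDerivWithinAt S (Sd x) (Set.Icc 0 a) x)
    (hS' : ∀ x ∈ Set.Icc 0 a,
      HasDerivWithinAt Sd ((q x : ℂ) * S x - lam * S x) (Set.Icc 0 a) x)
    (hC0 : C 0 = 1) (hCd0 : Cd 0 = 0) (hS0 : S 0 = 0) (hSd0 : Sd 0 = 1) :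
    S a = 2 * S (a / 2) * Sd (a / 2) := by
  set I := Set.Icc (0:ℝ) a with hI
  have hmaps : Set.MapsTo (fun x => a - x) I I := by
    intro x hx
    simp only [hI, Set.mem_Icc] at hx ⊢
    constructor <;> linarith [hx.1, hx.2]
  set F : ℝ → ℂ := fun x => S (a - x) * Sd x + Sd (a - x) * S x with hF
  -- derivative of F is 0 on I
  have hFderiv : ∀ x ∈ I, HasDerivWithinAt F 0 I x := by
    intro x hx
    have hax : a - x ∈ I := hmaps hx
    have hrefl : HasDerivWithinAt (fun y : ℝ => a - y) (-1) I x :=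
      (hasDerivWithinAt_id x I).const_sub a
    have h1 : HasDerivWithinAt (fun y => S (a - y)) (-Sd (a - x)) I x := by
      have := HasDerivWithinAt.scomp_of_eq x (hS _ hax) hrefl hmaps rfl
      simpa [Function.comp_def] using this
    have h2 : HasDerivWithinAt (fun y => Sd (a - y))
        (-((q x : ℂ) * S (a - x) - lam * S (a - x))) I x := by
      have := HasDerivWithinAt.scomp_of_eq x (hS' _ hax) hrefl hmaps rfl
      rw [hqeven x hx] at this
      simpa [Function.comp_def] using this
    have key : HasDerivWithinAt F
        ((-Sd (a - x)) * Sd x + S (a - x) * ((q x : ℂ) * S x - lam * S x)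
          + ((-((q x : ℂ) * S (a - x) - lam * S (a - x))) * S x
            + Sd (a - x) * Sd x)) I x :=
      (h1.mul (hS' x hx)).add (h2.mul (hS x hx))
    have hzero : (-Sd (a - x)) * Sd x + S (a - x) * ((q x : ℂ) * S x - lam * S x)
          + ((-((q x : ℂ) * S (a - x) - lam * S (a - x))) * S x
            + Sd (a - x) * Sd x) = 0 := by ring
    rw [hzero] at key
    exact key
  -- F is constant on I
  have hFcont : ContinuousOn F I := fun x hx => (hFderiv x hx).continuousWithinAt
  have hconst : ∀ x ∈ I, F x = F 0 := by
    apply constant_of_has_deriv_right_zero hFcont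
    intro x hx
    have hx' : x ∈ I := ⟨hx.1, le_of_lt hx.2⟩
    exact (hFderiv x hx').mono_of_mem_nhdsWithin (Icc_mem_nhdsGE_of_mem hx)
  have hhalf : (a/2 : ℝ) ∈ I := by
    simp only [hI, Set.mem_Icc]; constructor <;> linarith
  have := hconst (a/2) hhalf
  have haa : a - a/2 = a/2 := by ring
  simp only [hF, haa, sub_zero, hS0, hSd0, mul_one, mul_zero, add_zero] at this
  rw [← this]; ring
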